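/- Let Γ ⊆ ℕ^{d+1} be the semigroup Γ(n₁,n₂) of a product filtration and Δ(m₁,m₂) ⊂ ℝ^d its level-1 convex bodies (closure of { (a₁/i,...,a_d/i) : (a,i) ∈ Γ(m₁,m₂), i > 0 }). Then for all m₁,m₂,n₁,n₂ ∈ ℕ, the Minkowski sum satisfies Δ(m₁,m₂) + Δ(n₁,n₂) ⊆ Δ(m₁+n₁, m₂+n₂); in particular n₁Δ(1,0) + n₂Δ(0,1) ⊆ Δ(n₁,n₂). -/

import Mathlib

open Pointwise

noncomputable section

variable {R : Type*} [CommRing R] [IsDomain R]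

/-- The level-1 convex body `Δ(n₁,n₂)` of the semigroup
`Γ(n₁,n₂) = {(ν(f), i) : f ∈ I(1)_{in₁} I(2)_{in₂}}`: the closure of
`{ν(f)/i : f ∈ I(1)_{i n₁} I(2)_{i n₂}, f ≠ 0, i > 0}` in `ℝ^d`. -/
def Δ (d : ℕ) (ν : R → (Fin d → ℤ)) (I₁ I₂ : ℕ → Ideal R) (n₁ n₂ : ℕ) :
    Set (Fin d → ℝ) :=
  closure {x | ∃ i : ℕ, 0 < i ∧ ∃ f : R, f ≠ 0 ∧ f ∈ I₁ (i * n₁) * I₂ (i * n₂) ∧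
    x = fun k => (ν f k : ℝ) / (i : ℝ)}

lemma filt_pow_le (I : ℕ → Ideal R) (h0 : I 0 = ⊤)
    (hmul : ∀ a b, I a * I b ≤ I (a + b)) (a n : ℕ) : (I a) ^ n ≤ I (n * a) := by
  induction n with
  | zero => simp [h0]
  | succ n ih =>
      rw [pow_succ]
      calc (I a) ^ n * I a ≤ I (n * a) * I a := Ideal.mul_mono ih le_rfl
        _ ≤ I (n * a + a) := hmul _ _
        _ = I ((n + 1) * a) := by ring_nf

lemma nu_pow (ν : R → (Fin d → ℤ))
    (hν : ∀ f g : R, f ≠ 0 → g ≠ 0 → ν (f * g) = ν f + ν g)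
    (f : R) (hf : f ≠ 0) : ∀ n : ℕ, 0 < n → ν (f ^ n) = n • ν f := by
  intro n hn
  induction n with
  | zero => omega
  | succ n ih =>
      rcases Nat.eq_zero_or_pos n with h | h
      · subst h; simp
      · rw [pow_succ, hν _ _ (pow_ne_zero _ hf) hf, ih h, succ_nsmul]

/-- **(Superadditivity of the convex bodies `Δ(n₁,n₂)` with respect to Minkowski sum.)**
For `m_R`-filtrations `𝓘(1), 𝓘(2)` on a domain `R` and a `ℤ^d`-valued multiplicative
valuation `ν`, one has `Δ(m₁,m₂) + Δ(n₁,n₂) ⊆ Δ(m₁+n₁, m₂+n₂)` for all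
`m₁, m₂, n₁, n₂ ∈ ℕ`; in particular `n₁Δ(1,0) + n₂Δ(0,1) ⊆ Δ(n₁,n₂)`. -/
theorem stmt_18 (d : ℕ) (ν : R → (Fin d → ℤ))
    (hν : ∀ f g : R, f ≠ 0 → g ≠ 0 → ν (f * g) = ν f + ν g)
    (I₁ I₂ : ℕ → Ideal R) (h0₁ : I₁ 0 = ⊤) (h0₂ : I₂ 0 = ⊤)
    (hmul₁ : ∀ a b, I₁ a * I₁ b ≤ I₁ (a + b)) (hmul₂ : ∀ a b, I₂ a * I₂ b ≤ I₂ (a + b)) :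
    (∀ m₁ m₂ n₁ n₂ : ℕ,
      Δ d ν I₁ I₂ m₁ m₂ + Δ d ν I₁ I₂ n₁ n₂ ⊆ Δ d ν I₁ I₂ (m₁ + n₁) (m₂ + n₂)) ∧
    (∀ n₁ n₂ : ℕ,
      (n₁ : ℝ) • Δ d ν I₁ I₂ 1 0 + (n₂ : ℝ) • Δ d ν I₁ I₂ 0 1 ⊆ Δ d ν I₁ I₂ n₁ n₂) := by
  -- membership of powers in product filtrations
  have hpow : ∀ (a b i n : ℕ) (f : R), f ∈ I₁ (i * a) * I₂ (i * b) →
      f ^ n ∈ I₁ ((n * i) * a) * I₂ ((n * i) * b) := by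
    intro a b i n f hf
    have h1 : (I₁ (i * a) * I₂ (i * b)) ^ n ≤ I₁ ((n * i) * a) * I₂ ((n * i) * b) := by
      rw [mul_pow]
      have := Ideal.mul_mono (filt_pow_le I₁ h0₁ hmul₁ (i * a) n)
        (filt_pow_le I₂ h0₂ hmul₂ (i * b) n)
      simpa [mul_assoc] using this
    exact h1 (Ideal.pow_mem_pow hf n)
  -- the underlying (pre-closure) sets
  set S : ℕ → ℕ → Set (Fin d → ℝ) := fun n₁ n₂ =>
    {x | ∃ i : ℕ, 0 < i ∧ ∃ f : R, f ≠ 0 ∧ f ∈ I₁ (i * n₁) * I₂ (i * n₂) ∧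
      x = fun k => (ν f k : ℝ) / (i : ℝ)} with hS
  have hΔ : ∀ n₁ n₂, Δ d ν I₁ I₂ n₁ n₂ = closure (S n₁ n₂) := fun _ _ => rfl
  -- core additivity of the pre-closure sets
  have hadd : ∀ m₁ m₂ n₁ n₂, ∀ x ∈ S m₁ m₂, ∀ y ∈ S n₁ n₂,
      x + y ∈ S (m₁ + n₁) (m₂ + n₂) := by
    intro m₁ m₂ n₁ n₂ x hx y hy
    obtain ⟨i, hi, f, hf0, hf, rfl⟩ := hx
    obtain ⟨j, hj, g, hg0, hg, rfl⟩ := hy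
    refine ⟨i * j, Nat.mul_pos hi hj, f ^ j * g ^ i,
      mul_ne_zero (pow_ne_zero _ hf0) (pow_ne_zero _ hg0), ?_, ?_⟩
    · have hfj := hpow m₁ m₂ i j f hf
      have hgi := hpow n₁ n₂ j i g hg
      have : (f ^ j) * (g ^ i) ∈
          (I₁ ((j * i) * m₁) * I₂ ((j * i) * m₂)) * (I₁ ((i * j) * n₁) * I₂ ((i * j) * n₂)) :=
        Ideal.mul_mem_mul hfj hgi
      have hle : (I₁ ((j * i) * m₁) * I₂ ((j * i) * m₂)) * (I₁ ((i * j) * n₁) * I₂ ((i * j) * n₂))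
          ≤ I₁ ((i * j) * (m₁ + n₁)) * I₂ ((i * j) * (m₂ + n₂)) := by
        calc (I₁ ((j * i) * m₁) * I₂ ((j * i) * m₂)) * (I₁ ((i * j) * n₁) * I₂ ((i * j) * n₂))
            = (I₁ ((j * i) * m₁) * I₁ ((i * j) * n₁)) * (I₂ ((j * i) * m₂) * I₂ ((i * j) * n₂)) :=
              by ring
          _ ≤ I₁ ((j * i) * m₁ + (i * j) * n₁) * I₂ ((j * i) * m₂ + (i * j) * n₂) :=
              Ideal.mul_mono (hmul₁ _ _) (hmul₂ _ _)
          _ = I₁ ((i * j) * (m₁ + n₁)) * I₂ ((i * j) * (m₂ + n₂)) := by ring_nf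
      exact hle this
    · have hnu : ν (f ^ j * g ^ i) = j • ν f + i • ν g := by
        rw [hν _ _ (pow_ne_zero _ hf0) (pow_ne_zero _ hg0),
          nu_pow ν hν f hf0 j hj, nu_pow ν hν g hg0 i hi]
      funext k
      have hi' : (i : ℝ) ≠ 0 := Nat.cast_ne_zero.mpr hi.ne'
      have hj' : (j : ℝ) ≠ 0 := Nat.cast_ne_zero.mpr hj.ne'
      simp only [Pi.add_apply, hnu, Pi.smul_apply, smul_eq_mul]
      push_cast
      field_simp
      simp only [nsmul_eq_mul]
      push_cast
      ring
  -- superadditivity for the closures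
  have main : ∀ m₁ m₂ n₁ n₂ : ℕ,
      Δ d ν I₁ I₂ m₁ m₂ + Δ d ν I₁ I₂ n₁ n₂ ⊆ Δ d ν I₁ I₂ (m₁ + n₁) (m₂ + n₂) := by
    intro m₁ m₂ n₁ n₂ z hz
    obtain ⟨x, hx, y, hy, rfl⟩ := hz
    rw [hΔ] at hx hy ⊢
    exact map_mem_closure₂ (continuous_add) hx hy (hadd m₁ m₂ n₁ n₂)
  refine ⟨main, ?_⟩
  -- scaling: (n : ℝ) • Δ(a,b) ⊆ Δ(n*a, n*b)
  have hscale : ∀ (n a b : ℕ), (n : ℝ) • Δ d ν I₁ I₂ a b ⊆ Δ d ν I₁ I₂ (n * a) (n * b) := by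
    intro n a b
    rcases Nat.eq_zero_or_pos n with h | h
    · subst h
      intro x hx
      obtain ⟨y, _, rfl⟩ := hx
      simp only [Nat.cast_zero, zero_smul, Nat.zero_mul]
      apply subset_closure
      refine ⟨1, one_pos, 1, one_ne_zero, by simp [h0₁, h0₂], ?_⟩
      have h1 : ν (1 : R) = 0 := by
        have := hν 1 1 one_ne_zero one_ne_zero
        rw [mul_one] at this
        exact left_eq_add.mp this
      funext k
      simp [h1]
    · rw [hΔ, hΔ]
      refine (smul_closure_subset _ _).trans (closure_mono ?_)
      rintro x ⟨y, ⟨i, hi, f, hf0, hf, rfl⟩, rfl⟩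
      refine ⟨i, hi, f ^ n, pow_ne_zero _ hf0, ?_, ?_⟩
      · have := hpow a b i n f hf
        have he₁ : (n * i) * a = i * (n * a) := by ring
        have he₂ : (n * i) * b = i * (n * b) := by ring
        rwa [he₁, he₂] at this
      · funext k
        rw [nu_pow ν hν f hf0 n h]
        simp only [Pi.smul_apply, nsmul_eq_mul, smul_eq_mul]
        push_cast
        ring
  intro n₁ n₂
  have h1 := hscale n₁ 1 0
  have h2 := hscale n₂ 0 1
  simp only [Nat.mul_one, Nat.mul_zero] at h1 h2
  calc (n₁ : ℝ) • Δ d ν I₁ I₂ 1 0 + (n₂ : ℝ) • Δ d ν I₁ I₂ 0 1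
      ⊆ Δ d ν I₁ I₂ n₁ 0 + Δ d ν I₁ I₂ 0 n₂ := Set.add_subset_add h1 h2
    _ ⊆ Δ d ν I₁ I₂ (n₁ + 0) (0 + n₂) := main n₁ 0 0 n₂
    _ = Δ d ν I₁ I₂ n₁ n₂ := by rw [Nat.add_zero, Nat.zero_add]

end
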